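/- Let A be a p×m matrix with entries in the field RatFunc ℂ of rational functions over ℂ, and let r be the rank of A over RatFunc ℂ. Then there exists a finite set S ⊆ ℂ such that for every z ∈ ℂ with z ∉ S, the denominator of every entry of A is nonzero at z and the complex p×m matrix A(z), obtained by evaluating every entry of A at z, has rank exactly r. In particular, rank A(z) equals its maximal value for all but finitely many z ∈ ℂ. -/

import Mathlib

open Matrix Polynomial

section Aux

variable {K : Type*} [Field K]

private lemma exists_cols_li {p m k : ℕ} (M : Matrix (Fin p) (Fin m) K)
    (hk : k ≤ M.rank) :
    ∃ g : Fin k → Fin m, Function.Injective g ∧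
      LinearIndependent K (fun i => Mᵀ (g i)) := by
  classical
  rw [Matrix.rank_eq_finrank_span_cols] at hk
  change k ≤ Module.finrank K (Submodule.span K (Set.range Mᵀ)) at hk
  obtain ⟨b, hbt, hspan, hli⟩ := exists_linearIndependent K (Set.range Mᵀ)
  have hbfin : b.Finite := (Set.finite_range Mᵀ).subset hbt
  haveI : Fintype b := hbfin.fintype
  have hcard : k ≤ Fintype.card b := by
    have h1 : Module.finrank K (Submodule.span K b) = b.toFinset.card :=
      finrank_span_set_eq_card hli
    rw [hspan] at h1
    rw [h1] at hk
    simpa [Set.toFinset_card] using hk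
  let e : Fin k → b := fun i => (Fintype.equivFin b).symm (Fin.castLE hcard i)
  have he : Function.Injective e := fun i j h => by
    have := (Fintype.equivFin b).symm.injective h
    exact Fin.castLE_injective hcard this
  have hmem : ∀ i, (e i : Fin p → K) ∈ Set.range Mᵀ := fun i => hbt (e i).2
  choose g hg using hmem
  refine ⟨g, ?_, ?_⟩
  · intro i j h
    apply he
    apply Subtype.ext
    rw [← hg i, ← hg j, h]
  · have hfe : (fun i => Mᵀ (g i)) = fun i => ((e i : Fin p → K)) :=
      funext fun i => hg i
    rw [hfe]
    exact hli.comp e he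

private lemma rank_submatrix_le_rank {p m k l : ℕ} (M : Matrix (Fin p) (Fin m) K)
    (f : Fin k → Fin p) (g : Fin l → Fin m) :
    (M.submatrix f g).rank ≤ M.rank := by
  have hcol : ∀ {a b c : ℕ} (N : Matrix (Fin a) (Fin b) K) (h : Fin c → Fin b),
      (N.submatrix id h).rank ≤ N.rank := by
    intro a b c N h
    rw [Matrix.rank_eq_finrank_span_cols, Matrix.rank_eq_finrank_span_cols]
    apply Submodule.finrank_mono
    apply Submodule.span_mono
    rintro _ ⟨j, rfl⟩
    exact ⟨h j, by ext i; rfl⟩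
  have hrow : (M.submatrix f id).rank ≤ M.rank := by
    rw [← Matrix.rank_transpose (M.submatrix f id), ← Matrix.rank_transpose M]
    have h1 : (M.submatrix f id)ᵀ = Mᵀ.submatrix id f := rfl
    rw [h1]
    exact hcol Mᵀ f
  calc (M.submatrix f g).rank = ((M.submatrix f id).submatrix id g).rank := rfl
    _ ≤ (M.submatrix f id).rank := hcol _ g
    _ ≤ M.rank := hrow

private lemma le_rank_of_det {p m k : ℕ} (M : Matrix (Fin p) (Fin m) K)
    {f : Fin k → Fin p} {g : Fin k → Fin m}
    (hdet : (M.submatrix f g).det ≠ 0) : k ≤ M.rank := by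
  have hu : IsUnit (M.submatrix f g) :=
    (Matrix.isUnit_iff_isUnit_det _).mpr (isUnit_iff_ne_zero.mpr hdet)
  have h1 := Matrix.rank_of_isUnit _ hu
  calc k = (M.submatrix f g).rank := by rw [h1, Fintype.card_fin]
    _ ≤ M.rank := rank_submatrix_le_rank M f g

private lemma exists_submatrix_det_ne_zero {p m k : ℕ} (M : Matrix (Fin p) (Fin m) K)
    (hk : k ≤ M.rank) :
    ∃ f : Fin k → Fin p, ∃ g : Fin k → Fin m,
      (M.submatrix f g).det ≠ 0 := by
  obtain ⟨g, hginj, hgli⟩ := exists_cols_li M hk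
  set N : Matrix (Fin p) (Fin k) K := M.submatrix id g with hN
  have hNT : Nᵀ = fun i => Mᵀ (g i) := by ext i j; rfl
  have hrankN : N.rank = k := by
    rw [Matrix.rank_eq_finrank_span_cols]
    have : Set.range Nᵀ = Set.range fun i => Mᵀ (g i) := by rw [hNT]
    change Module.finrank K (Submodule.span K (Set.range Nᵀ)) = k
    rw [this, finrank_span_eq_card hgli, Fintype.card_fin]
  have hk2 : k ≤ Nᵀ.rank := by rw [Matrix.rank_transpose, hrankN]
  obtain ⟨f, hfinj, hfli⟩ := exists_cols_li Nᵀ hk2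
  refine ⟨f, g, ?_⟩
  have hli : LinearIndependent K (fun i => (M.submatrix f g) i) := by
    have h2 : (fun i => (M.submatrix f g) i) = fun i => Nᵀᵀ (f i) := by
      ext i j; rfl
    rw [h2]; exact hfli
  have hu : IsUnit (M.submatrix f g) :=
    Matrix.linearIndependent_rows_iff_isUnit.mp hli
  exact ((Matrix.isUnit_iff_isUnit_det _).mp hu).ne_zero

end Aux


private lemma det_map'' {R S : Type*} [CommRing R] [CommRing S] {k : ℕ}
    (f : R →+* S) (M : Matrix (Fin k) (Fin k) R) :
    (M.map f).det = f M.det :=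
  (RingHom.map_det f M).symm

private lemma rank_smul_matrix {p m : ℕ} {K : Type*} [Field K]
    (c : K) (hc : c ≠ 0) (M : Matrix (Fin p) (Fin m) K) :
    (c • M).rank = M.rank := by
  have h1 : c • M = (c • (1 : Matrix (Fin p) (Fin p) K)) * M := by
    rw [Matrix.smul_mul, Matrix.one_mul]
  have hdet : IsUnit ((c • (1 : Matrix (Fin p) (Fin p) K)).det) := by
    rw [Matrix.det_smul, Matrix.det_one, mul_one]
    exact isUnit_iff_ne_zero.mpr (pow_ne_zero _ hc)
  rw [h1, Matrix.rank_mul_eq_right_of_isUnit_det _ _ hdet]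

set_option synthInstance.maxHeartbeats 1000000 in
/-- For a matrix of rational functions over `ℂ` with rank `r` over
`RatFunc ℂ`, all but finitely many points `z ∈ ℂ` avoid all denominator
zeros and give an evaluated matrix of rank exactly `r`. -/
theorem rank_eval_eq_generic_rank_cofinite
    {p m : ℕ} (A : Matrix (Fin p) (Fin m) (RatFunc ℂ)) (r : ℕ)
    (hr : A.rank = r) :
    ∃ S : Finset ℂ, ∀ z : ℂ, z ∉ S →
      (∀ i j, Polynomial.eval z (A i j).denom ≠ 0) ∧
      (Matrix.rank (fun i j =>
        Polynomial.eval z (A i j).num / Polynomial.eval z (A i j).denom :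
          Matrix (Fin p) (Fin m) ℂ) = r) := by
  classical
  set D : Polynomial ℂ := ∏ q : Fin p × Fin m, (A q.1 q.2).denom with hDdef
  have hD : D ≠ 0 :=
    Finset.prod_ne_zero_iff.mpr fun q _ => RatFunc.denom_ne_zero _
  set Rst : Fin p → Fin m → Polynomial ℂ :=
    fun i j => ∏ q ∈ Finset.univ.erase (i, j), (A q.1 q.2).denom with hRdef
  have hsplit : ∀ i j, (A i j).denom * Rst i j = D := by
    intro i j
    exact Finset.mul_prod_erase Finset.univ (fun q : Fin p × Fin m => (A q.1 q.2).denom)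
      (Finset.mem_univ (i, j))
  set B : Matrix (Fin p) (Fin m) (Polynomial ℂ) :=
    fun i j => (A i j).num * Rst i j with hBdef
  have hBC : ∀ i j, algebraMap (Polynomial ℂ) (RatFunc ℂ) (B i j)
      = algebraMap (Polynomial ℂ) (RatFunc ℂ) D * A i j := by
    intro i j
    have hnum : algebraMap (Polynomial ℂ) (RatFunc ℂ) (A i j).num
        = A i j * algebraMap (Polynomial ℂ) (RatFunc ℂ) (A i j).denom :=
      (div_eq_iff (RatFunc.algebraMap_ne_zero (RatFunc.denom_ne_zero _))).mp
        (RatFunc.num_div_denom (A i j))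
    calc algebraMap (Polynomial ℂ) (RatFunc ℂ) (B i j)
        = algebraMap (Polynomial ℂ) (RatFunc ℂ) (A i j).num *
          algebraMap (Polynomial ℂ) (RatFunc ℂ) (Rst i j) := _root_.map_mul _ _ _
      _ = algebraMap (Polynomial ℂ) (RatFunc ℂ) ((A i j).denom * Rst i j) * A i j := by
          rw [hnum, _root_.map_mul]; ring
      _ = algebraMap (Polynomial ℂ) (RatFunc ℂ) D * A i j := by rw [hsplit]
  set C : Matrix (Fin p) (Fin m) (RatFunc ℂ) :=
    B.map (algebraMap (Polynomial ℂ) (RatFunc ℂ)) with hCdef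
  have hdne : algebraMap (Polynomial ℂ) (RatFunc ℂ) D ≠ 0 :=
    RatFunc.algebraMap_ne_zero hD
  have hCsmul : C = algebraMap (Polynomial ℂ) (RatFunc ℂ) D • A := by
    ext i j
    rw [hCdef, Matrix.map_apply, hBC, Matrix.smul_apply, smul_eq_mul]
  have hrankC : C.rank = r := by
    rw [hCsmul, rank_smul_matrix _ hdne, hr]
  obtain ⟨f₀, g₀, hdet₀⟩ := exists_submatrix_det_ne_zero C hrankC.ge
  set q : Polynomial ℂ := (B.submatrix f₀ g₀).det with hqdef
  have hq : q ≠ 0 := by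
    intro h0
    apply hdet₀
    have hCB : C.submatrix f₀ g₀
        = (B.submatrix f₀ g₀).map (algebraMap (Polynomial ℂ) (RatFunc ℂ)) := rfl
    rw [hCB, det_map'', ← hqdef, h0, map_zero]
  have hDq : D * q ≠ 0 := mul_ne_zero hD hq
  refine ⟨(D * q).roots.toFinset, fun z hz => ?_⟩
  have hevalDq : Polynomial.eval z (D * q) ≠ 0 := by
    intro h0
    exact hz (Multiset.mem_toFinset.mpr ((Polynomial.mem_roots hDq).mpr h0))
  rw [Polynomial.eval_mul] at hevalDq
  have hevalD : Polynomial.eval z D ≠ 0 := left_ne_zero_of_mul hevalDq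
  have hevalq : Polynomial.eval z q ≠ 0 := right_ne_zero_of_mul hevalDq
  have hdenom : ∀ i j, Polynomial.eval z (A i j).denom ≠ 0 := by
    intro i j h0
    apply hevalD
    rw [← hsplit i j, Polynomial.eval_mul, h0, zero_mul]
  refine ⟨hdenom, ?_⟩
  have hevalR : ∀ i j, Polynomial.eval z (Rst i j) ≠ 0 := by
    intro i j h0
    apply hevalD
    rw [← hsplit i j, Polynomial.eval_mul, h0, mul_zero]
  set Bz : Matrix (Fin p) (Fin m) ℂ := B.map (Polynomial.evalRingHom z) with hBzdef
  have hAz : (fun i j =>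
        Polynomial.eval z (A i j).num / Polynomial.eval z (A i j).denom :
          Matrix (Fin p) (Fin m) ℂ) = (Polynomial.eval z D)⁻¹ • Bz := by
    ext i j
    rw [Matrix.smul_apply, smul_eq_mul, hBzdef, Matrix.map_apply]
    show Polynomial.eval z (A i j).num / Polynomial.eval z (A i j).denom
      = (Polynomial.eval z D)⁻¹ * Polynomial.eval z (B i j)
    rw [hBdef]
    simp only
    rw [Polynomial.eval_mul, ← hsplit i j, Polynomial.eval_mul]
    field_simp [hdenom i j, hevalR i j]
  -- rank Bz = r
  have hge : r ≤ Bz.rank := by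
    apply le_rank_of_det Bz (f := f₀) (g := g₀)
    have hBzq : (Bz.submatrix f₀ g₀).det = Polynomial.eval z q := by
      have h1 : Bz.submatrix f₀ g₀
          = (B.submatrix f₀ g₀).map (Polynomial.evalRingHom z) := rfl
      rw [h1, det_map'', ← hqdef]
      rfl
    rw [hBzq]
    exact hevalq
  have hle : Bz.rank ≤ r := by
    by_contra hcon
    push_neg at hcon
    obtain ⟨f, g, hdet⟩ := exists_submatrix_det_ne_zero Bz (Nat.succ_le_of_lt hcon)
    have hBzero : (B.submatrix f g).det = 0 := by
      by_contra hne
      have hCne : (C.submatrix f g).det ≠ 0 := by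
        have h1 : C.submatrix f g
            = (B.submatrix f g).map (algebraMap (Polynomial ℂ) (RatFunc ℂ)) := rfl
        rw [h1, det_map'']
        exact RatFunc.algebraMap_ne_zero hne
      have := le_rank_of_det C hCne
      rw [hrankC] at this
      omega
    apply hdet
    have h1 : Bz.submatrix f g
        = (B.submatrix f g).map (Polynomial.evalRingHom z) := rfl
    rw [h1, det_map'', hBzero, map_zero]
  have hBzrank : Bz.rank = r := le_antisymm hle hge
  rw [hAz, rank_smul_matrix _ (inv_ne_zero hevalD), hBzrank]
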